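/- The number of solutions (x₁, x₂, y₁, y₂) ∈ F_q⁴ with q odd to the system x₂ + y₂ = x₁^m y₁^n = x₁^n y₁^m and (x₁,x₂) ≠ (y₁,y₂) equals q(q−1)(2 + gcd(m−n, q−1)). -/

import Mathlib

lemma aux_card_units_pow_eq_one {F : Type*} [Field F] [Fintype F] (d : ℕ) :
    Nat.card {u : Fˣ // u ^ d = 1} = Nat.gcd d (Fintype.card F - 1) := by
  classical
  have hcard : Fintype.card Fˣ = Fintype.card F - 1 := by
    rw [← Nat.card_eq_fintype_card, Nat.card_units, Nat.card_eq_fintype_card]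
  have hN0 : 0 < Fintype.card Fˣ := Fintype.card_pos
  set N := Fintype.card Fˣ with hN
  set e := Nat.gcd d N with he
  have hepos : 0 < e := Nat.gcd_pos_of_pos_right _ hN0
  have hediv : e ∣ N := Nat.gcd_dvd_right d N
  have h1 : ∀ u : Fˣ, u ^ d = 1 ↔ u ^ e = 1 := fun u => by
    rw [he, pow_gcd_eq_one]; exact ⟨fun h => ⟨h, pow_card_eq_one⟩, fun h => h.1⟩
  obtain ⟨g, hg⟩ := IsCyclic.exists_ofOrder_eq_natCard (α := Fˣ)
  have hgN : orderOf g = N := by rw [hg, Nat.card_eq_fintype_card]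
  have hζ : orderOf (g ^ (N / e)) = e := by
    rw [orderOf_pow, hgN, Nat.gcd_eq_right (Nat.div_dvd_of_dvd hediv),
      Nat.div_div_self hediv hN0.ne']
  haveI : NeZero e := ⟨hepos.ne'⟩
  have hprim : IsPrimitiveRoot (g ^ (N / e)) e := by
    simpa [hζ] using IsPrimitiveRoot.orderOf (g ^ (N / e))
  calc Nat.card {u : Fˣ // u ^ d = 1}
      = Nat.card {u : Fˣ // u ^ e = 1} :=
        Nat.card_congr (Equiv.subtypeEquivRight h1)
    _ = Nat.card (rootsOfUnity e F) :=
        Nat.card_congr (Equiv.subtypeEquivRight fun u => (mem_rootsOfUnity _ u).symm)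
    _ = e := by rw [hprim.card_rootsOfUnity']
    _ = Nat.gcd d (Fintype.card F - 1) := congrArg _ hcard

lemma aux_card_pairs (F : Type*) [Field F] [Fintype F] (d : ℕ) :
    Nat.card {a : F × F // a.1 ≠ 0 ∧ a.2 ≠ 0 ∧ a.1 ^ d = a.2 ^ d}
      = (Fintype.card F - 1) * Nat.gcd d (Fintype.card F - 1) := by
  classical
  have e1 : {a : F × F // a.1 ≠ 0 ∧ a.2 ≠ 0 ∧ a.1 ^ d = a.2 ^ d}
      ≃ {v : Fˣ × Fˣ // v.1 ^ d = v.2 ^ d} :=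
    { toFun := fun a => ⟨(Units.mk0 a.1.1 a.2.1, Units.mk0 a.1.2 a.2.2.1),
        Units.ext (by simpa using a.2.2.2)⟩
      invFun := fun v => ⟨((v.1.1 : F), (v.1.2 : F)), v.1.1.ne_zero, v.1.2.ne_zero,
        by have := congrArg Units.val v.2; simpa using this⟩
      left_inv := fun a => by ext <;> simp
      right_inv := fun v => by ext <;> simp }
  have e2 : {v : Fˣ × Fˣ // v.1 ^ d = v.2 ^ d} ≃ Fˣ × {u : Fˣ // u ^ d = 1} :=
    { toFun := fun v => ⟨v.1.2, ⟨v.1.1 * v.1.2⁻¹, by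
        rw [mul_pow, inv_pow, v.2, mul_inv_cancel]⟩⟩
      invFun := fun p => ⟨(p.2.1 * p.1, p.1), by rw [mul_pow, p.2.2, one_mul]⟩
      left_inv := fun v => by ext <;> simp
      right_inv := fun p => by ext <;> simp }
  rw [Nat.card_congr (e1.trans e2), Nat.card_prod, aux_card_units_pow_eq_one,
    Nat.card_units, Nat.card_eq_fintype_card]

/-- For `q` odd, the number of solutions `(x₁,x₂,y₁,y₂) ∈ F_q⁴` of
`x₂ + y₂ = x₁^m y₁^n = x₁^n y₁^m` with `(x₁,x₂) ≠ (y₁,y₂)` is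
`q (q−1) (2 + gcd(m−n, q−1))`. -/
theorem stmt_15 {F : Type*} [Field F] [Fintype F] (q : ℕ) (hq : Fintype.card F = q)
    (hodd : Odd q) (m n : ℕ) (hm : 1 ≤ m ∧ m ≤ q - 1) (hn : 1 ≤ n ∧ n ≤ q - 1) :
    Nat.card {p : (F × F) × (F × F) //
        p.1.2 + p.2.2 = p.1.1 ^ m * p.2.1 ^ n ∧
        p.1.1 ^ m * p.2.1 ^ n = p.1.1 ^ n * p.2.1 ^ m ∧
        p.1 ≠ p.2} =
      q * (q - 1) * (2 + Int.gcd ((m : ℤ) - n) (q - 1)) := by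
  classical
  subst hq
  set N := Fintype.card F with hNdef
  have hN2 : 2 ≤ N := Fintype.one_lt_card
  have hm1 : m ≠ 0 := by omega
  have hn1 : n ≠ 0 := by omega
  set d : ℕ := ((m : ℤ) - n).natAbs with hd
  set g : ℕ := Nat.gcd d (N - 1) with hg
  have hg1 : 1 ≤ g := Nat.gcd_pos_of_pos_right _ (by omega)
  have hgcd : Int.gcd ((m : ℤ) - n) ((N : ℤ) - 1) = g := by
    have hcast : ((N : ℤ) - 1) = ((N - 1 : ℕ) : ℤ) := by omega
    rw [hcast]
    simp [Int.gcd, hd, hg]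
  have h2 : (2 : F) ≠ 0 := by
    apply Ring.two_ne_zero
    intro h
    have h3 := (FiniteField.even_card_iff_char_two (F := F)).mp h
    rw [← hNdef] at h3
    have h4 := Nat.odd_iff.mp hodd
    omega
  have key : ∀ x y : F, x ≠ 0 → y ≠ 0 →
      (x ^ m * y ^ n = x ^ n * y ^ m ↔ x ^ d = y ^ d) := by
    intro x y hx hy
    rcases le_total n m with h | h
    · have hmd : m = n + d := by omega
      rw [hmd, pow_add, pow_add]
      have hne : x ^ n * y ^ n ≠ 0 := mul_ne_zero (pow_ne_zero _ hx) (pow_ne_zero _ hy)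
      constructor
      · intro hxy
        apply mul_left_cancel₀ hne
        linear_combination hxy
      · intro hxy
        linear_combination (x ^ n * y ^ n) * hxy
    · have hnd : n = m + d := by omega
      rw [hnd, pow_add, pow_add]
      have hne : x ^ m * y ^ m ≠ 0 := mul_ne_zero (pow_ne_zero _ hx) (pow_ne_zero _ hy)
      constructor
      · intro hxy
        refine (mul_left_cancel₀ hne ?_).symm
        linear_combination hxy
      · intro hxy
        linear_combination (- (x ^ m * y ^ m)) * hxy
  -- cardinality of complements of a point
  have hcompl : ∀ v : F, Fintype.card {x : F // x ≠ v} = N - 1 := by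
    intro v
    have e := Equiv.subtypeEquiv (p := fun x : F => x ≠ v) (q := fun y : F => y ≠ 0)
      (Equiv.subRight v) (fun x => by simp [sub_eq_zero])
    rw [← Nat.card_eq_fintype_card, Nat.card_congr e,
      Nat.card_congr (unitsEquivNeZero (G₀ := F)).symm, Nat.card_units,
      Nat.card_eq_fintype_card]
  -- sigma decomposition
  have eA : {p : (F × F) × (F × F) //
        p.1.2 + p.2.2 = p.1.1 ^ m * p.2.1 ^ n ∧
        p.1.1 ^ m * p.2.1 ^ n = p.1.1 ^ n * p.2.1 ^ m ∧
        p.1 ≠ p.2} ≃ Σ a : F × F, {b : F × F //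
          b.1 + b.2 = a.1 ^ m * a.2 ^ n ∧ a.1 ^ m * a.2 ^ n = a.1 ^ n * a.2 ^ m ∧
          (a.1, b.1) ≠ (a.2, b.2)} :=
    { toFun := fun p => ⟨(p.1.1.1, p.1.2.1), (p.1.1.2, p.1.2.2), p.2⟩
      invFun := fun s => ⟨((s.1.1, s.2.1.1), (s.1.2, s.2.1.2)), s.2.2⟩
      left_inv := fun p => rfl
      right_inv := fun s => rfl }
  have hB : ∀ a : F × F, Fintype.card {b : F × F //
        b.1 + b.2 = a.1 ^ m * a.2 ^ n ∧ a.1 ^ m * a.2 ^ n = a.1 ^ n * a.2 ^ m ∧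
        (a.1, b.1) ≠ (a.2, b.2)} =
      if a.1 ^ m * a.2 ^ n = a.1 ^ n * a.2 ^ m then
        (if a.1 = a.2 then N - 1 else N) else 0 := by
    intro a
    by_cases hC : a.1 ^ m * a.2 ^ n = a.1 ^ n * a.2 ^ m
    · rw [if_pos hC]
      by_cases hdg : a.1 = a.2
      · rw [if_pos hdg]
        have e1 : {b : F × F //
            b.1 + b.2 = a.1 ^ m * a.2 ^ n ∧ a.1 ^ m * a.2 ^ n = a.1 ^ n * a.2 ^ m ∧
            (a.1, b.1) ≠ (a.2, b.2)}
            ≃ {x : F // x ≠ a.1 ^ m * a.2 ^ n - x} :=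
          { toFun := fun b => ⟨b.1.1, fun hx => b.2.2.2
              (Prod.ext hdg (hx.trans (eq_sub_of_add_eq' b.2.1).symm))⟩
            invFun := fun x => ⟨(x.1, a.1 ^ m * a.2 ^ n - x.1),
              by ring, hC, fun hb => x.2 (congrArg Prod.snd hb)⟩
            left_inv := fun b => Subtype.ext (Prod.ext rfl (eq_sub_of_add_eq' b.2.1).symm)
            right_inv := fun x => rfl }
        have e2 : {x : F // x ≠ a.1 ^ m * a.2 ^ n - x}
            ≃ {x : F // x ≠ a.1 ^ m * a.2 ^ n / 2} :=
          Equiv.subtypeEquivRight (fun x => by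
            apply not_congr
            rw [eq_div_iff h2]
            constructor <;> intro h <;> linear_combination h)
        rw [Fintype.card_congr (e1.trans e2), hcompl]
      · rw [if_neg hdg]
        have e1 : {b : F × F //
            b.1 + b.2 = a.1 ^ m * a.2 ^ n ∧ a.1 ^ m * a.2 ^ n = a.1 ^ n * a.2 ^ m ∧
            (a.1, b.1) ≠ (a.2, b.2)} ≃ F :=
          { toFun := fun b => b.1.1
            invFun := fun x => ⟨(x, a.1 ^ m * a.2 ^ n - x),
              by ring, hC, fun hb => hdg (congrArg Prod.fst hb)⟩
            left_inv := fun b => Subtype.ext (Prod.ext rfl (eq_sub_of_add_eq' b.2.1).symm)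
            right_inv := fun x => rfl }
        rw [Fintype.card_congr e1]
    · rw [if_neg hC, Fintype.card_eq_zero_iff]
      exact ⟨fun b => hC b.2.2.1⟩
  rw [Nat.card_eq_fintype_card, Fintype.card_congr eA, Fintype.card_sigma]
  rw [Finset.sum_congr rfl (fun a _ => hB a)]
  have hsplit : ∀ a : F × F,
      (if a.1 ^ m * a.2 ^ n = a.1 ^ n * a.2 ^ m then
        (if a.1 = a.2 then N - 1 else N) else 0)
      = (if a.1 = a.2 then N - 1 else 0)
        + (if (a.1 ^ m * a.2 ^ n = a.1 ^ n * a.2 ^ m) ∧ a.1 ≠ a.2 then N else 0) := by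
    intro a
    by_cases h1 : a.1 = a.2
    · have hC : a.1 ^ m * a.2 ^ n = a.1 ^ n * a.2 ^ m := by rw [h1]; ring
      rw [if_pos hC, if_pos h1, if_pos h1, if_neg (by simp [h1]), add_zero]
    · by_cases hC : a.1 ^ m * a.2 ^ n = a.1 ^ n * a.2 ^ m <;> simp [h1, hC]
  rw [Finset.sum_congr rfl (fun a _ => hsplit a), Finset.sum_add_distrib]
  have hdiagcard : (Finset.univ.filter fun a : F × F => a.1 = a.2).card = N := by
    rw [← Fintype.card_subtype]
    exact Fintype.card_congr
      { toFun := fun a => a.1.1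
        invFun := fun x => ⟨(x, x), rfl⟩
        left_inv := fun a => Subtype.ext (Prod.ext rfl a.2)
        right_inv := fun x => rfl }
  have hsum1 : (∑ a : F × F, if a.1 = a.2 then N - 1 else 0) = N * (N - 1) := by
    rw [Finset.sum_ite, Finset.sum_const, Finset.sum_const_zero, add_zero, smul_eq_mul,
      hdiagcard]
  -- counting the off-diagonal multiplicative condition
  have hScard : (Finset.univ.filter fun a : F × F =>
      (a.1 ^ m * a.2 ^ n = a.1 ^ n * a.2 ^ m) ∧ a.1 ≠ a.2).card
      = (N - 1) + (N - 1) * g := by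
    set W : F × F → Prop := fun a => a.1 ≠ 0 ∧ a.2 ≠ 0 ∧ a.1 ^ d = a.2 ^ d with hW
    set P : F × F → Prop :=
      fun a => (a.1 ^ m * a.2 ^ n = a.1 ^ n * a.2 ^ m) ∧ a.1 ≠ a.2 with hP
    have c1 : (Finset.univ.filter fun a : F × F => a.1 = 0 ∧ a.2 ≠ 0).card = N - 1 := by
      rw [← Fintype.card_subtype]
      rw [Fintype.card_congr
        (⟨fun a => ⟨a.1.2, a.2.2⟩, fun y => ⟨(0, y.1), rfl, y.2⟩,
          fun a => Subtype.ext (Prod.ext a.2.1.symm rfl), fun y => rfl⟩ :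
          {a : F × F // a.1 = 0 ∧ a.2 ≠ 0} ≃ {y : F // y ≠ 0})]
      exact hcompl 0
    have c2 : (Finset.univ.filter fun a : F × F => ¬ a.1 = 0 ∧ a.2 = 0).card = N - 1 := by
      rw [← Fintype.card_subtype]
      rw [Fintype.card_congr
        (⟨fun a => ⟨a.1.1, a.2.1⟩, fun x => ⟨(x.1, 0), x.2, rfl⟩,
          fun a => Subtype.ext (Prod.ext rfl a.2.2.symm), fun x => rfl⟩ :
          {a : F × F // ¬ a.1 = 0 ∧ a.2 = 0} ≃ {x : F // x ≠ 0})]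
      exact hcompl 0
    have c3 : (Finset.univ.filter fun a : F × F => a.1 = a.2 ∧ a.1 ≠ 0).card = N - 1 := by
      rw [← Fintype.card_subtype]
      rw [Fintype.card_congr
        (⟨fun a => ⟨a.1.1, a.2.2⟩, fun x => ⟨(x.1, x.1), rfl, x.2⟩,
          fun a => Subtype.ext (Prod.ext rfl a.2.1), fun x => rfl⟩ :
          {a : F × F // a.1 = a.2 ∧ a.1 ≠ 0} ≃ {x : F // x ≠ 0})]
      exact hcompl 0
    have cW : (Finset.univ.filter W).card = (N - 1) * g := by
      rw [← Fintype.card_subtype, ← Nat.card_eq_fintype_card]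
      rw [aux_card_pairs F d, ← hNdef, ← hg]
    have e1 : (Finset.univ.filter fun a : F × F => P a ∧ a.1 = 0)
        = Finset.univ.filter fun a : F × F => a.1 = 0 ∧ a.2 ≠ 0 := by
      refine Finset.filter_congr fun a _ => ?_
      constructor
      · rintro ⟨⟨-, hne⟩, h0⟩
        exact ⟨h0, fun h => hne (by rw [h0, h])⟩
      · rintro ⟨h0, hy⟩
        refine ⟨⟨?_, ?_⟩, h0⟩
        · rw [h0, zero_pow hm1, zero_pow hn1, zero_mul, zero_mul]
        · rw [h0]; exact fun h => hy h.symm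
    have e2 : (Finset.univ.filter fun a : F × F => (P a ∧ ¬ a.1 = 0) ∧ a.2 = 0)
        = Finset.univ.filter fun a : F × F => ¬ a.1 = 0 ∧ a.2 = 0 := by
      refine Finset.filter_congr fun a _ => ?_
      constructor
      · rintro ⟨⟨-, h10⟩, h20⟩
        exact ⟨h10, h20⟩
      · rintro ⟨h10, h20⟩
        refine ⟨⟨⟨?_, ?_⟩, h10⟩, h20⟩
        · rw [h20, zero_pow hm1, zero_pow hn1, mul_zero, mul_zero]
        · intro h; exact h10 (by rw [h, h20])
    have e3 : (Finset.univ.filter fun a : F × F => (P a ∧ ¬ a.1 = 0) ∧ ¬ a.2 = 0)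
        = Finset.univ.filter fun a : F × F => W a ∧ ¬ a.1 = a.2 := by
      refine Finset.filter_congr fun a _ => ?_
      constructor
      · rintro ⟨⟨⟨hc2, hne⟩, h10⟩, h20⟩
        exact ⟨⟨h10, h20, (key _ _ h10 h20).mp hc2⟩, hne⟩
      · rintro ⟨⟨h10, h20, hdd⟩, hne⟩
        exact ⟨⟨⟨(key _ _ h10 h20).mpr hdd, hne⟩, h10⟩, h20⟩
    have e4 : (Finset.univ.filter fun a : F × F => W a ∧ a.1 = a.2)
        = Finset.univ.filter fun a : F × F => a.1 = a.2 ∧ a.1 ≠ 0 := by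
      refine Finset.filter_congr fun a _ => ?_
      constructor
      · rintro ⟨⟨h10, -, -⟩, hdgg⟩
        exact ⟨hdgg, h10⟩
      · rintro ⟨hdgg, h10⟩
        exact ⟨⟨h10, by rw [← hdgg]; exact h10, by rw [hdgg]⟩, hdgg⟩
    have split1 := Finset.card_filter_add_card_filter_not
      (s := Finset.univ.filter P) (p := fun a : F × F => a.1 = 0)
    have split2 := Finset.card_filter_add_card_filter_not
      (s := Finset.univ.filter fun a : F × F => P a ∧ ¬ a.1 = 0)
      (p := fun a : F × F => a.2 = 0)
    have split3 := Finset.card_filter_add_card_filter_not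
      (s := Finset.univ.filter W) (p := fun a : F × F => a.1 = a.2)
    rw [Finset.filter_filter, Finset.filter_filter, e1, c1] at split1
    rw [Finset.filter_filter, Finset.filter_filter, e2, c2, e3] at split2
    rw [Finset.filter_filter, Finset.filter_filter, e4, c3, cW] at split3
    have hPeq : (Finset.univ.filter fun a : F × F =>
        (a.1 ^ m * a.2 ^ n = a.1 ^ n * a.2 ^ m) ∧ a.1 ≠ a.2).card
        = (Finset.univ.filter P).card :=
      congrArg Finset.card (Finset.filter_congr fun a _ => Iff.rfl)
    rw [hPeq]
    omega
  have hsum2 : (∑ a : F × F,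
      if (a.1 ^ m * a.2 ^ n = a.1 ^ n * a.2 ^ m) ∧ a.1 ≠ a.2 then N else 0)
      = ((N - 1) + (N - 1) * g) * N := by
    rw [Finset.sum_ite, Finset.sum_const, Finset.sum_const_zero, add_zero, smul_eq_mul,
      hScard]
  rw [hsum1, hsum2, hgcd]
  set k := N - 1 with hk
  ring
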